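/- Let f(z) = (√z + 1)·√(1 − z²) for 0 ≤ z ≤ 1. Then f is concave on [0,1], i.e., f''(z) ≤ 0 for all 0 < z < 1. -/

import Mathlib

open Set Real

/-- The derivative of an antitone function on an open set is nonpositive. -/
lemma aux_deriv_nonpos_of_antitoneOn {g : ℝ → ℝ} {s : Set ℝ} (hs : IsOpen s)
    (hg : AntitoneOn g s) {z : ℝ} (hz : z ∈ s) : deriv g z ≤ 0 := by
  by_cases hd : DifferentiableAt ℝ g z
  · have h := hd.hasDerivAt
    rw [hasDerivAt_iff_tendsto_slope] at h
    refine le_of_tendsto h ?_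
    filter_upwards [self_mem_nhdsWithin,
      mem_nhdsWithin_of_mem_nhds (hs.mem_nhds hz)] with y hy hys
    have hyz : y ≠ z := hy
    rw [slope_def_field]
    rcases lt_or_gt_of_ne hyz with h1 | h1
    · have : g z ≤ g y := hg hys hz h1.le
      exact div_nonpos_iff.2 (Or.inl ⟨by linarith, by linarith⟩)
    · have : g y ≤ g z := hg hz hys h1.le
      exact div_nonpos_iff.2 (Or.inr ⟨by linarith, by linarith⟩)
  · rw [deriv_zero_of_not_differentiableAt hd]

/-- The square root of a nonnegative concave function is concave. -/
lemma aux_concave_sqrt_comp {s : Set ℝ} {u : ℝ → ℝ} (hu : ConcaveOn ℝ s u)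
    (hu0 : ∀ x ∈ s, 0 ≤ u x) : ConcaveOn ℝ s (fun z => Real.sqrt (u z)) := by
  refine ⟨hu.1, fun x hx y hy a b ha hb hab => ?_⟩
  have h1 : a • u x + b • u y ≤ u (a • x + b • y) := hu.2 hx hy ha hb hab
  have hsq := Real.strictConcaveOn_sqrt.concaveOn
  have h2 : a • Real.sqrt (u x) + b • Real.sqrt (u y) ≤ Real.sqrt (a • u x + b • u y) :=
    hsq.2 (mem_Ici.2 (hu0 x hx)) (mem_Ici.2 (hu0 y hy)) ha hb hab
  exact h2.trans (Real.sqrt_le_sqrt h1)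

lemma aux_concave1 : ConcaveOn ℝ (Set.Icc (0:ℝ) 1) (fun z => z - z ^ 3) := by
  have hd1 : deriv (fun z : ℝ => z - z ^ 3) = fun z => 1 - 3 * z ^ 2 := by
    funext z
    have : HasDerivAt (fun z : ℝ => z - z ^ 3) (1 - 3 * z ^ 2) z := by
      have := (hasDerivAt_id z).sub ((hasDerivAt_pow 3 z))
      simpa [Pi.sub_def, Pi.mul_def, Pi.neg_def] using this.congr_deriv (by ring)
    exact this.deriv
  refine concaveOn_of_deriv2_nonpos (convex_Icc 0 1) (by fun_prop) ?_ ?_ ?_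
  · intro x _; exact (differentiableAt_id.sub (differentiableAt_pow 3)).differentiableWithinAt
  · rw [hd1]
    intro x _
    exact ((differentiableAt_const 1).sub ((differentiableAt_const 3).mul
      (differentiableAt_pow 2))).differentiableWithinAt
  · intro x hx
    rw [interior_Icc] at hx
    have : deriv^[2] (fun z : ℝ => z - z ^ 3) x = deriv (deriv (fun z : ℝ => z - z ^ 3)) x := rfl
    rw [this, hd1]
    have : HasDerivAt (fun z : ℝ => 1 - 3 * z ^ 2) (-(6 * x)) x := by
      have := (hasDerivAt_const x (1:ℝ)).sub ((hasDerivAt_const x (3:ℝ)).mul (hasDerivAt_pow 2 x))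
      simpa [Pi.sub_def, Pi.mul_def, Pi.neg_def] using this.congr_deriv (by ring)
    rw [this.deriv]
    nlinarith [hx.1]

lemma aux_concave2 : ConcaveOn ℝ (Set.Icc (0:ℝ) 1) (fun z : ℝ => 1 - z ^ 2) := by
  have hd1 : deriv (fun z : ℝ => 1 - z ^ 2) = fun z => -(2 * z) := by
    funext z
    have : HasDerivAt (fun z : ℝ => 1 - z ^ 2) (-(2 * z)) z := by
      have := (hasDerivAt_const z (1:ℝ)).sub (hasDerivAt_pow 2 z)
      simpa [Pi.sub_def, Pi.mul_def, Pi.neg_def] using this.congr_deriv (by ring)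
    exact this.deriv
  refine concaveOn_of_deriv2_nonpos (convex_Icc 0 1) (by fun_prop) ?_ ?_ ?_
  · intro x _
    exact ((differentiableAt_const 1).sub (differentiableAt_pow 2)).differentiableWithinAt
  · rw [hd1]
    intro x _
    exact (((differentiableAt_const 2).mul differentiableAt_id).neg).differentiableWithinAt
  · intro x hx
    rw [interior_Icc] at hx
    have h2 : deriv^[2] (fun z : ℝ => 1 - z ^ 2) x = deriv (deriv (fun z : ℝ => 1 - z ^ 2)) x := rfl
    rw [h2, hd1]
    have : HasDerivAt (fun z : ℝ => -(2 * z)) (-2) x := by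
      have := (((hasDerivAt_const x (2:ℝ)).mul (hasDerivAt_id x))).neg
      simpa [Pi.sub_def, Pi.mul_def, Pi.neg_def] using this.congr_deriv (by ring)
    rw [this.deriv]
    norm_num

/-- f(z) = (√z + 1)√(1 − z²) is concave on [0,1]; in particular f''(z) ≤ 0
for all 0 < z < 1. -/
theorem stmt_9 (f : ℝ → ℝ)
    (hf : f = fun z => (Real.sqrt z + 1) * Real.sqrt (1 - z ^ 2)) :
    ConcaveOn ℝ (Set.Icc (0 : ℝ) 1) f ∧
      ∀ z, 0 < z → z < 1 → deriv (deriv f) z ≤ 0 := by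
  have hg : ConcaveOn ℝ (Set.Icc (0:ℝ) 1)
      (fun z => Real.sqrt (z - z ^ 3) + Real.sqrt (1 - z ^ 2)) := by
    refine (aux_concave_sqrt_comp aux_concave1 ?_).add (aux_concave_sqrt_comp aux_concave2 ?_)
    · intro x hx
      obtain ⟨h0, h1⟩ := hx
      nlinarith [mul_nonneg (mul_nonneg h0 (sub_nonneg.2 h1)) (by linarith : (0:ℝ) ≤ 1 + x)]
    · intro x hx
      obtain ⟨h0, h1⟩ := hx
      nlinarith [mul_nonneg (mul_nonneg h0 (sub_nonneg.2 h1)) (by linarith : (0:ℝ) ≤ 1 + x)]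
  have heq : ∀ x ∈ Set.Icc (0:ℝ) 1, f x = Real.sqrt (x - x ^ 3) + Real.sqrt (1 - x ^ 2) := by
    intro x hx
    rw [hf]
    simp only
    have h1 : Real.sqrt x * Real.sqrt (1 - x ^ 2) = Real.sqrt (x - x ^ 3) := by
      rw [← Real.sqrt_mul hx.1]
      congr 1
      ring
    rw [add_mul, one_mul, h1]
  have hconc : ConcaveOn ℝ (Set.Icc (0:ℝ) 1) f := by
    refine ⟨convex_Icc 0 1, fun x hx y hy a b ha hb hab => ?_⟩
    rw [heq x hx, heq y hy, heq _ ((convex_Icc 0 1) hx hy ha hb hab)]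
    exact hg.2 hx hy ha hb hab
  refine ⟨hconc, fun z hz0 hz1 => ?_⟩
  have hdiff : ∀ x ∈ Set.Ioo (0:ℝ) 1, DifferentiableAt ℝ f x := by
    intro x hx
    rw [hf]
    have h1 : DifferentiableAt ℝ Real.sqrt x := (Real.hasStrictDerivAt_sqrt hx.1.ne').hasDerivAt.differentiableAt
    have h2 : (1 : ℝ) - x ^ 2 ≠ 0 := by nlinarith [hx.1, hx.2]
    have h3 : DifferentiableAt ℝ (fun z : ℝ => 1 - z ^ 2) x :=
      (differentiableAt_const 1).sub (differentiableAt_pow 2)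
    exact ((h1.add (differentiableAt_const 1)).mul (h3.sqrt h2))
  have hconc' : ConcaveOn ℝ (Set.Ioo (0:ℝ) 1) f :=
    hconc.subset Set.Ioo_subset_Icc_self (convex_Ioo 0 1)
  have hanti : AntitoneOn (deriv f) (Set.Ioo (0:ℝ) 1) := hconc'.antitoneOn_deriv hdiff
  exact aux_deriv_nonpos_of_antitoneOn isOpen_Ioo hanti ⟨hz0, hz1⟩
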